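/- Let g ≥ 1 be an integer, let Z be a symmetric g×g complex matrix whose imaginary part is positive definite, and let ω ∈ ℂ^g. Then the family (exp(π i nᵀ Z n + 2π i nᵀ ω))_{n ∈ ℤ^g}, indexed by integer vectors n of length g, is summable; in particular the Riemann theta series θ(ω, Z) = ∑_{n ∈ ℤ^g} exp(π i nᵀ Z n + 2π i nᵀ ω) converges absolutely. -/

import Mathlib

open scoped BigOperators

/-- The Riemann theta series term for an integer vector `n`. -/
noncomputable def thetaTerm {g : ℕ} (ω : Fin g → ℂ) (Z : Matrix (Fin g) (Fin g) ℂ)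
    (n : Fin g → ℤ) : ℂ :=
  Complex.exp (Real.pi * Complex.I *
      dotProduct (fun i => (n i : ℂ)) (Z.mulVec fun i => (n i : ℂ)) +
    2 * Real.pi * Complex.I * dotProduct (fun i => (n i : ℂ)) ω)

open Real

private lemma summable_pi_prod {g : ℕ} (h : Fin g → ℤ → ℝ) (hnn : ∀ i m, 0 ≤ h i m)
    (hs : ∀ i, Summable (h i)) :
    Summable fun n : Fin g → ℤ => ∏ i, h i (n i) := by
  induction g with
  | zero => exact Summable.of_finite
  | succ g ih =>
      rw [← (Fin.consEquiv (fun _ : Fin (g + 1) => ℤ)).summable_iff]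
      have heq : ((fun n : Fin (g + 1) → ℤ => ∏ i, h i (n i)) ∘
            (Fin.consEquiv fun _ : Fin (g + 1) => ℤ))
          = fun p : ℤ × (Fin g → ℤ) => h 0 p.1 * ∏ i, h i.succ (p.2 i) := by
        funext p
        simp [Fin.consEquiv, Fin.prod_univ_succ]
      rw [heq]
      have h1 : Summable fun m : ℤ => h 0 m := hs 0
      have h2 : Summable fun n : Fin g → ℤ => ∏ i, h i.succ (n i) :=
        ih _ (fun i m => hnn _ _) fun i => hs _
      have key := h1.mul_of_nonneg h2 (Pi.le_def.mpr fun m => hnn 0 m)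
        (Pi.le_def.mpr fun p => Finset.prod_nonneg fun i _ => hnn _ _)
      exact key

private lemma posdef_lower_bound {g : ℕ} (hg : 1 ≤ g) (Y : Matrix (Fin g) (Fin g) ℝ)
    (hY : Y.PosDef) :
    ∃ c > 0, ∀ x : Fin g → ℝ, c * (∑ i, x i ^ 2) ≤ dotProduct x (Y.mulVec x) := by
  haveI : Nonempty (Fin g) := Fin.pos_iff_nonempty.mp hg
  set Q : EuclideanSpace ℝ (Fin g) → ℝ :=
    fun x => dotProduct (⇑x) (Y.mulVec ⇑x) with hQdef
  have hφ : Continuous fun x : EuclideanSpace ℝ (Fin g) => (⇑x : Fin g → ℝ) :=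
    (PiLp.continuous_ofLp 2 fun _ : Fin g => ℝ)
  have hQcont : Continuous Q :=
    hφ.dotProduct (continuous_const.matrix_mulVec hφ)
  have hne : (Metric.sphere (0 : EuclideanSpace ℝ (Fin g)) 1).Nonempty :=
    NormedSpace.sphere_nonempty.mpr zero_le_one
  obtain ⟨x0, hx0mem, hx0min⟩ :=
    (isCompact_sphere (0 : EuclideanSpace ℝ (Fin g)) 1).exists_isMinOn hne
      hQcont.continuousOn
  have hx0 : x0 ≠ 0 := by
    intro h
    rw [h] at hx0mem
    simp at hx0mem
  have hc : 0 < Q x0 := by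
    have := hY.dotProduct_mulVec_pos (x := ⇑x0) (by exact fun h => hx0 (by simpa using congrArg (WithLp.toLp 2) h))
    simpa [dotProduct, star, Q] using this
  refine ⟨Q x0, hc, fun x => ?_⟩
  by_cases hx : x = 0
  · simp [hx, dotProduct]
  · set y : EuclideanSpace ℝ (Fin g) := (WithLp.equiv 2 (Fin g → ℝ)).symm x with hy
    have hyne : y ≠ 0 := by
      intro h; apply hx
      have := congrArg (⇑(WithLp.equiv 2 (Fin g → ℝ))) h
      simpa [hy] using this
    have hr : 0 < ‖y‖ := norm_pos_iff.mpr hyne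
    have hu : (‖y‖⁻¹ • y) ∈ Metric.sphere (0 : EuclideanSpace ℝ (Fin g)) 1 := by
      simp [norm_smul, abs_of_pos (inv_pos.mpr hr), inv_mul_cancel₀ hr.ne']
    have hmin : Q x0 ≤ Q (‖y‖⁻¹ • y) := hx0min hu
    have hQu : Q (‖y‖⁻¹ • y) = ‖y‖⁻¹ * (‖y‖⁻¹ * Q y) := by
      have hsm : (⇑(‖y‖⁻¹ • y) : Fin g → ℝ) = ‖y‖⁻¹ • (⇑y : Fin g → ℝ) := rfl
      rw [hQdef]
      simp only [hsm, Matrix.mulVec_smul, smul_dotProduct, dotProduct_smul]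
      simp [smul_eq_mul]
    have h2 : Q x0 * (‖y‖ * ‖y‖) ≤ Q y := by
      have hmin' : Q x0 ≤ ‖y‖⁻¹ * (‖y‖⁻¹ * Q y) := hQu ▸ hmin
      have h3 : Q x0 * (‖y‖ * ‖y‖) ≤ (‖y‖⁻¹ * (‖y‖⁻¹ * Q y)) * (‖y‖ * ‖y‖) := by
        nlinarith
      calc Q x0 * (‖y‖ * ‖y‖) ≤ (‖y‖⁻¹ * (‖y‖⁻¹ * Q y)) * (‖y‖ * ‖y‖) := h3
        _ = Q y := by field_simp
    have hnorm : ‖y‖ * ‖y‖ = ∑ i, x i ^ 2 := by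
      rw [EuclideanSpace.norm_eq, Real.mul_self_sqrt (by positivity)]
      simp only [Real.norm_eq_abs, sq_abs]
      rfl
    have hQy : Q y = dotProduct x (Y.mulVec x) := rfl
    rw [← hQy, ← hnorm]
    linarith [h2]

private lemma norm_thetaTerm {g : ℕ} (ω : Fin g → ℂ) (Z : Matrix (Fin g) (Fin g) ℂ)
    (n : Fin g → ℤ) :
    ‖thetaTerm ω Z n‖ = Real.exp
      (-(π * dotProduct (fun i => (n i : ℝ))
          ((Z.map Complex.im).mulVec fun i => (n i : ℝ)))
        - 2 * π * ∑ i, (n i : ℝ) * (ω i).im) := by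
  rw [thetaTerm, Complex.norm_exp]
  congr 1
  simp only [Complex.add_re, Complex.mul_re, Complex.mul_im, Complex.I_re, Complex.I_im,
    Complex.ofReal_re, Complex.ofReal_im, Complex.re_ofNat, Complex.im_ofNat,
    dotProduct, Matrix.mulVec, Matrix.map_apply, Complex.im_sum, Complex.re_sum,
    Complex.intCast_re, Complex.intCast_im, Finset.mul_sum]
  simp only [zero_mul, zero_sub, mul_zero, sub_zero, zero_add, neg_mul, mul_neg, neg_neg]
  simp [add_zero, mul_one, Finset.sum_neg_distrib, sub_eq_add_neg]

/-- for `Z` in the Siegel upper half-space of genus `g ≥ 1` and any `ω ∈ ℂ^g`,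
the family of terms of the Riemann theta series is summable, i.e. the theta series
converges absolutely. -/
theorem riemann_theta_summable (g : ℕ) (hg : 1 ≤ g)
    (Z : Matrix (Fin g) (Fin g) ℂ) (hZsym : Z.IsSymm)
    (hZpos : (Z.map Complex.im).PosDef)
    (ω : Fin g → ℂ) :
    Summable (fun n : Fin g → ℤ => thetaTerm ω Z n) := by
  obtain ⟨c, hc, hbound⟩ := posdef_lower_bound hg (Z.map Complex.im) hZpos
  set h : Fin g → ℤ → ℝ := fun i m =>
    Real.exp (-π * (c * (m : ℝ) ^ 2 - 2 * |(ω i).im| * |(m : ℝ)|)) with hh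
  have hsummable : ∀ i, Summable (h i) := by
    intro i
    have := summable_pow_mul_jacobiTheta₂_term_bound |(ω i).im| hc 0
    simpa [hh] using this
  have hnn : ∀ i m, 0 ≤ h i m := fun i m => Real.exp_nonneg _
  have hprod : Summable fun n : Fin g → ℤ => ∏ i, h i (n i) :=
    summable_pi_prod h hnn hsummable
  apply Summable.of_norm_bounded hprod
  intro n
  rw [norm_thetaTerm, hh]
  simp only
  rw [← Real.exp_sum]
  apply Real.exp_le_exp.mpr
  have hsum : ∑ i, -π * (c * ((n i : ℝ)) ^ 2 - 2 * |(ω i).im| * |((n i : ℝ))|)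
      = -(π * (c * ∑ i, ((n i : ℝ)) ^ 2)) + 2 * π * ∑ i, |(ω i).im| * |((n i : ℝ))| := by
    rw [show -(π * (c * ∑ i, ((n i : ℝ)) ^ 2)) = ∑ i, -(π * (c * ((n i : ℝ)) ^ 2)) by
        rw [Finset.mul_sum, Finset.mul_sum, ← Finset.sum_neg_distrib]]
    rw [show (2 * π * ∑ i, |(ω i).im| * |((n i : ℝ))|)
        = ∑ i, 2 * π * (|(ω i).im| * |((n i : ℝ))|) by rw [Finset.mul_sum]]
    rw [← Finset.sum_add_distrib]
    exact Finset.sum_congr rfl fun i _ => by ring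
  rw [hsum]
  have hQ := hbound (fun i => (n i : ℝ))
  have hQ' : π * (c * ∑ i, ((n i : ℝ)) ^ 2) ≤ π * dotProduct (fun i => (n i : ℝ))
      ((Z.map Complex.im).mulVec fun i => (n i : ℝ)) :=
    mul_le_mul_of_nonneg_left hQ pi_pos.le
  have hlin : -∑ i, (n i : ℝ) * (ω i).im ≤ ∑ i, |(ω i).im| * |((n i : ℝ))| := by
    rw [← Finset.sum_neg_distrib]
    apply Finset.sum_le_sum
    intro i _
    calc -((n i : ℝ) * (ω i).im) ≤ |(n i : ℝ) * (ω i).im| := neg_le_abs _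
      _ = |(ω i).im| * |((n i : ℝ))| := by rw [abs_mul]; ring
  have hlin' : 2 * π * (-∑ i, (n i : ℝ) * (ω i).im)
      ≤ 2 * π * ∑ i, |(ω i).im| * |((n i : ℝ))| :=
    mul_le_mul_of_nonneg_left hlin (by positivity)
  nlinarith [hQ', hlin']
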